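/- Let m : ℕ≥1 → ℤ be any sequence of integers. Then there exists a unique sequence τ : ℕ≥1 → ℤ of integers such that, as formal power series in t, 1 − Σ_{k≥1} m(k) t^k = ∏_{n≥1} (1 − t^n)^{τ(n)}. -/

import Mathlib

open PowerSeries

/-- The power series `1 − t^{n+1}` as a unit of `ℤ[[t]]`. -/
noncomputable def oneSubXPowUnit (n : ℕ) : (PowerSeries ℤ)ˣ where
  val := 1 - PowerSeries.X ^ (n + 1)
  inv := PowerSeries.invOfUnit (1 - PowerSeries.X ^ (n + 1)) 1
  val_inv := PowerSeries.mul_invOfUnit _ _ (by simp)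
  inv_val := by
    rw [mul_comm]
    exact PowerSeries.mul_invOfUnit _ _ (by simp)

/-- multiplicativity of the congruence `f ≡ 1 - a X^k  (mod X^(k+1))` for `k ≥ 1`. -/
lemma congr_mul {k : ℕ} (hk : 1 ≤ k) {f g : PowerSeries ℤ} {a b : ℤ}
    (hf : (X : PowerSeries ℤ)^(k+1) ∣ f - (1 - C (R := ℤ) a * X^k))
    (hg : (X : PowerSeries ℤ)^(k+1) ∣ g - (1 - C (R := ℤ) b * X^k)) :
    (X : PowerSeries ℤ)^(k+1) ∣ f * g - (1 - C (R := ℤ) (a+b) * X^k) := by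
  have hx : (X : PowerSeries ℤ)^(k+1) ∣ X^k * X^k := by
    rw [← pow_add]; exact pow_dvd_pow X (by omega)
  have key : f * g - (1 - C (R := ℤ) (a+b) * X^k)
      = (f - (1 - C (R := ℤ) a * X^k)) * g + (1 - C (R := ℤ) a * X^k) * (g - (1 - C (R := ℤ) b * X^k))
        + (C (R := ℤ) a * C (R := ℤ) b) * (X^k * X^k) := by
    rw [map_add]; ring
  rw [key]
  exact dvd_add (dvd_add (hf.mul_right g) (hg.mul_left _)) (hx.mul_left _)

lemma zpow_congr (n : ℕ) (a : ℤ) :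
    (X : PowerSeries ℤ)^(n+2) ∣
      ((oneSubXPowUnit n ^ a : (PowerSeries ℤ)ˣ) : PowerSeries ℤ)
        - (1 - C (R := ℤ) a * X^(n+1)) := by
  have hk : 1 ≤ n + 1 := by omega
  have hval : ((oneSubXPowUnit n : (PowerSeries ℤ)ˣ) : PowerSeries ℤ) = 1 - X^(n+1) := rfl
  have hu : (X : PowerSeries ℤ)^(n+1+1) ∣
      ((oneSubXPowUnit n : (PowerSeries ℤ)ˣ) : PowerSeries ℤ) - (1 - C (R := ℤ) 1 * X^(n+1)) := by
    rw [hval]; simp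
  have hx : (X : PowerSeries ℤ)^(n+1+1) ∣ X^(n+1) * X^(n+1) := by
    rw [← pow_add]; exact pow_dvd_pow X (by omega)
  have huinv : (X : PowerSeries ℤ)^(n+1+1) ∣
      (((oneSubXPowUnit n)⁻¹ : (PowerSeries ℤ)ˣ) : PowerSeries ℤ) - (1 - C (R := ℤ) (-1) * X^(n+1)) := by
    set v := (((oneSubXPowUnit n)⁻¹ : (PowerSeries ℤ)ˣ) : PowerSeries ℤ) with hv
    have hmul : ((oneSubXPowUnit n : (PowerSeries ℤ)ˣ) : PowerSeries ℤ) * v = 1 :=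
      (oneSubXPowUnit n).mul_inv
    rw [hval] at hmul
    have key : v - (1 - C (R := ℤ) (-1) * X^(n+1))
        = v * (X^(n+1) * X^(n+1)) + ((1 - X^(n+1)) * v - 1) * (1 + X^(n+1)) := by
      rw [map_neg, map_one]; ring
    rw [key, hmul, sub_self, zero_mul, add_zero]
    exact hx.mul_left v
  induction a using Int.induction_on with
  | zero => simpa using dvd_zero _
  | succ i ih =>
      have := congr_mul hk ih hu
      rw [← Units.val_mul, ← zpow_add_one] at this
      exact_mod_cast this
  | pred i ih =>
      have := congr_mul hk ih huinv
      rw [← Units.val_mul, ← zpow_sub_one] at this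
      simpa [sub_eq_add_neg] using this

/-- coefficient of `g * (1 - X^(N+1))^a` in degrees `n ≤ N+1`. -/
lemma coeff_mul_zpow (g : PowerSeries ℤ) (N : ℕ) (a : ℤ) {n : ℕ} (hn : n ≤ N + 1) :
    coeff (R := ℤ) n (g * ((oneSubXPowUnit N ^ a : (PowerSeries ℤ)ˣ) : PowerSeries ℤ))
      = coeff (R := ℤ) n g - a * (if n = N + 1 then constantCoeff (R := ℤ) g else 0) := by
  have hdvd : (X : PowerSeries ℤ)^(N+2) ∣
      g * ((oneSubXPowUnit N ^ a : (PowerSeries ℤ)ˣ) : PowerSeries ℤ)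
        - g * (1 - C (R := ℤ) a * X^(N+1)) := by
    have := (zpow_congr N a).mul_left g
    rwa [mul_sub] at this
  have hc : coeff (R := ℤ) n (g * ((oneSubXPowUnit N ^ a : (PowerSeries ℤ)ˣ) : PowerSeries ℤ))
      = coeff (R := ℤ) n (g * (1 - C (R := ℤ) a * X^(N+1))) := by
    have := PowerSeries.X_pow_dvd_iff.mp hdvd n (by omega)
    rw [map_sub, sub_eq_zero] at this
    exact this
  rw [hc, mul_sub, mul_one, map_sub, mul_comm g, mul_assoc, PowerSeries.coeff_C_mul,
    mul_comm _ g, PowerSeries.coeff_mul_X_pow']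
  rcases eq_or_lt_of_le hn with h | h
  · subst h
    simp [PowerSeries.coeff_zero_eq_constantCoeff]
  · rw [if_neg (by omega), if_neg (by omega)]


noncomputable def tauSeq (F : PowerSeries ℤ) : ℕ → ℤ
  | N =>
    coeff (R := ℤ) (N+1)
      ((∏ i ∈ (Finset.range N).attach,
          oneSubXPowUnit i.1 ^ tauSeq F i.1 : (PowerSeries ℤ)ˣ) : PowerSeries ℤ)
      - coeff (R := ℤ) (N+1) F
  decreasing_by exact Finset.mem_range.mp i.2

lemma tauSeq_def (F : PowerSeries ℤ) (N : ℕ) :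
    tauSeq F N =
      coeff (R := ℤ) (N+1)
        ((∏ i ∈ Finset.range N, oneSubXPowUnit i ^ tauSeq F i : (PowerSeries ℤ)ˣ) :
          PowerSeries ℤ)
      - coeff (R := ℤ) (N+1) F := by
  rw [tauSeq, Finset.prod_attach (Finset.range N) (fun i => oneSubXPowUnit i ^ tauSeq F i)]

/-- For any integer sequence `m(1), m(2), …` there is a unique
integer sequence `τ(1), τ(2), …` (here `τ i` denotes `τ(i+1)`, the exponent of
the factor `1 − t^{i+1}`) such that, as formal power series,
`1 − Σ_{k≥1} m(k) t^k = ∏_{n≥1} (1 − t^n)^{τ(n)}`; the infinite product is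
interpreted t-adically via its truncations. -/
theorem exists_unique_product_exponents (m : ℕ → ℤ) :
    ∃! τ : ℕ → ℤ, ∀ N n : ℕ, n ≤ N →
      (PowerSeries.coeff (R := ℤ) n)
          (PowerSeries.mk fun k => if k = 0 then 1 else -(m k)) =
      (PowerSeries.coeff (R := ℤ) n)
          (((∏ i ∈ Finset.range N, oneSubXPowUnit i ^ τ i :
              (PowerSeries ℤ)ˣ) : (PowerSeries ℤ)ˣ) : PowerSeries ℤ) := by
  set F : PowerSeries ℤ := PowerSeries.mk fun k => if k = 0 then 1 else -(m k) with hF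
  have hF0 : coeff (R := ℤ) 0 F = 1 := by simp [hF]
  set τ : ℕ → ℤ := tauSeq F with hτ
  set P : ℕ → PowerSeries ℤ := fun N =>
    ((∏ i ∈ Finset.range N, oneSubXPowUnit i ^ τ i : (PowerSeries ℤ)ˣ) : PowerSeries ℤ)
    with hPdef
  have hPsucc : ∀ N, P (N+1) = P N *
      ((oneSubXPowUnit N ^ τ N : (PowerSeries ℤ)ˣ) : PowerSeries ℤ) := by
    intro N
    simp only [hPdef, Finset.prod_range_succ, Units.val_mul]
  have hP : ∀ N, ∀ n ≤ N, coeff (R := ℤ) n F = coeff (R := ℤ) n (P N) := by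
    intro N
    induction N with
    | zero =>
        intro n hn
        interval_cases n
        simpa [hPdef] using hF0
    | succ N ih =>
        intro n hn
        rw [hPsucc, coeff_mul_zpow _ N _ hn]
        by_cases h : n = N + 1
        · subst h
          rw [if_pos rfl]
          have hc0 : constantCoeff (R := ℤ) (P N) = 1 := by
            rw [← PowerSeries.coeff_zero_eq_constantCoeff, ← ih 0 (Nat.zero_le _), hF0]
          rw [hc0, mul_one, hτ, tauSeq_def]
          ring
        · rw [if_neg h, mul_zero, sub_zero]
          exact ih n (by omega)
  refine ⟨τ, fun N n hn => hP N n hn, ?_⟩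
  intro σ hσ
  funext N
  induction N using Nat.strong_induction_on with
  | _ N ih =>
    have hPeq : ((∏ i ∈ Finset.range N, oneSubXPowUnit i ^ σ i : (PowerSeries ℤ)ˣ) :
        PowerSeries ℤ) = P N := by
      simp only [hPdef]
      congr 1
      exact Finset.prod_congr rfl fun i hi => by rw [ih i (Finset.mem_range.mp hi)]
    have h1 := hσ (N+1) (N+1) le_rfl
    rw [Finset.prod_range_succ, Units.val_mul, hPeq,
      coeff_mul_zpow _ N _ le_rfl, if_pos rfl] at h1
    have h2 := hP (N+1) (N+1) le_rfl
    rw [hPsucc, coeff_mul_zpow _ N _ le_rfl, if_pos rfl] at h2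
    have hc0 : constantCoeff (R := ℤ) (P N) = 1 := by
      rw [← PowerSeries.coeff_zero_eq_constantCoeff, ← hP N 0 (Nat.zero_le _), hF0]
    rw [hc0, mul_one] at h1 h2
    omega
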